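/- Let A be a quasitriangular bialgebra over a field F with R-matrix R and let b be a balance, i.e. an invertible central element of A with Δ(b) = (b⊗b)·R₂₁·R. Then (id, (R₂₁)⁻¹, b) is a cylindrical structure on (A, A). -/

import Mathlib

open TensorProduct

noncomputable section

variable (F : Type*) [Field F]

section BialgDefs

variable (A : Type*) [Ring A] [Bialgebra F A]

/-- Conjugation by an invertible element, as an algebra automorphism. -/
def conjEquiv (g gi : A) (h1 : g * gi = 1) (h2 : gi * g = 1) : A ≃ₐ[F] A where
  toFun a := g * a * gi
  invFun a := gi * a * g
  left_inv a := by simp only [← mul_assoc]; rw [h2, one_mul, mul_assoc, h2, mul_one]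
  right_inv a := by simp only [← mul_assoc]; rw [h1, one_mul, mul_assoc, h1, mul_one]
  map_mul' a b := by
    show g * (a * b) * gi = (g * a * gi) * (g * b * gi)
    simp only [mul_assoc]; rw [← mul_assoc gi g, h2, one_mul]
  map_add' a b := by
    show g * (a + b) * gi = g * a * gi + g * b * gi
    rw [mul_add, add_mul]
  commutes' r := by
    show g * algebraMap F A r * gi = algebraMap F A r
    rw [← Algebra.commutes r g, mul_assoc, h1, mul_one]

/-- The coproduct of `A`, as an algebra map. -/
def cop : A →ₐ[F] A ⊗[F] A := Bialgebra.comulAlgHom F A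

/-- The flip of the two tensor legs. -/
def flipT : (A ⊗[F] A) ≃ₐ[F] A ⊗[F] A := Algebra.TensorProduct.comm F A A

/-- The opposite coproduct. -/
def copOp : A →ₐ[F] A ⊗[F] A := (flipT F A).toAlgHom.comp (cop F A)

/-- `X ↦ X₁₂` on triple tensors. -/
def i12 : (A ⊗[F] A) →ₐ[F] A ⊗[F] (A ⊗[F] A) :=
  Algebra.TensorProduct.map (AlgHom.id F A) Algebra.TensorProduct.includeLeft

/-- `X ↦ X₁₃` on triple tensors. -/
def i13 : (A ⊗[F] A) →ₐ[F] A ⊗[F] (A ⊗[F] A) :=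
  Algebra.TensorProduct.map (AlgHom.id F A) Algebra.TensorProduct.includeRight

/-- `X ↦ X₂₃` on triple tensors. -/
def i23 : (A ⊗[F] A) →ₐ[F] A ⊗[F] (A ⊗[F] A) :=
  Algebra.TensorProduct.includeRight

/-- `Δ ⊗ id` landing in `A ⊗ (A ⊗ A)`. -/
def cop12 : (A ⊗[F] A) →ₐ[F] A ⊗[F] (A ⊗[F] A) :=
  (Algebra.TensorProduct.assoc F F F A A A).toAlgHom.comp
    (Algebra.TensorProduct.map (cop F A) (AlgHom.id F A))

/-- `id ⊗ Δ`. -/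
def cop23 : (A ⊗[F] A) →ₐ[F] A ⊗[F] (A ⊗[F] A) :=
  Algebra.TensorProduct.map (AlgHom.id F A) (cop F A)

/-- `ε ⊗ id`. -/
def counit2l : (A ⊗[F] A) →ₐ[F] A :=
  (Algebra.TensorProduct.lid F A).toAlgHom.comp
    (Algebra.TensorProduct.map (Bialgebra.counitAlgHom F A) (AlgHom.id F A))

/-- `id ⊗ ε`. -/
def counit2r : (A ⊗[F] A) →ₐ[F] A :=
  (Algebra.TensorProduct.rid F F A).toAlgHom.comp
    (Algebra.TensorProduct.map (AlgHom.id F A) (Bialgebra.counitAlgHom F A))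

/-- `ψ ⊗ φ` on `A ⊗ A`. -/
def mapT (ψ φ : A →ₐ[F] A) : (A ⊗[F] A) →ₐ[F] A ⊗[F] A := Algebra.TensorProduct.map ψ φ

/-- `R^ψ = (ψ ⊗ id)(R)`. -/
def rpsi (R : A ⊗[F] A) (ψ : A ≃ₐ[F] A) : A ⊗[F] A :=
  Algebra.TensorProduct.map ψ.toAlgHom (AlgHom.id F A) R

/-- `A` is quasitriangular with R-matrix `R` (with inverse `Ri`). -/
structure IsQT (R Ri : A ⊗[F] A) : Prop where
  mulInv : R * Ri = 1
  invMul : Ri * R = 1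
  intw : ∀ a : A, R * cop F A a * Ri = copOp F A a
  copL : cop12 F A R = i13 F A R * i23 F A R
  copR : cop23 F A R = i13 F A R * i12 F A R

/-- `(ψ, J)` is a twist pair (with `Ji` the inverse of `J`). -/
structure IsTwistPair (R Ri J Ji : A ⊗[F] A) (ψ : A ≃ₐ[F] A) : Prop where
  mulInv : J * Ji = 1
  invMul : Ji * J = 1
  cocycle : i12 F A J * cop12 F A J = i23 F A J * cop23 F A J
  counitL : counit2l F A J = 1
  counitR : counit2r F A J = 1
  intw : ∀ a : A,
    mapT F A ψ.toAlgHom ψ.toAlgHom (copOp F A (ψ.symm a)) = J * cop F A a * Ji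
  rrel : flipT F A (mapT F A ψ.toAlgHom ψ.toAlgHom R) = flipT F A J * R * Ji

/-- The image of `s ⊗ A` inside `A ⊗ A`, for a subset `s ⊆ A`. -/
def legSpan (s : Set A) : Submodule F (A ⊗[F] A) :=
  Submodule.span F {x : A ⊗[F] A | ∃ b ∈ s, ∃ a : A, x = b ⊗ₜ[F] a}

/-- `B` is a right coideal subalgebra of `A`. -/
def IsRightCoideal (B : Subalgebra F A) : Prop :=
  ∀ b ∈ B, cop F A b ∈ legSpan F A (B : Set A)

/-- The tensor K-matrix `𝕂 = (R^ψ)₂₁ ⬝ (1 ⊗ K) ⬝ R`. -/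
def tenK (R : A ⊗[F] A) (ψ : A ≃ₐ[F] A) (K : A) : A ⊗[F] A :=
  flipT F A (rpsi F A R ψ) * ((1 : A) ⊗ₜ[F] K) * R

/-- `(ψ, J, K)` is a cylindrical structure on `(A, B)`. -/
structure IsCylindrical (R Ri : A ⊗[F] A) (B : Subalgebra F A) (J Ji : A ⊗[F] A)
    (ψ : A ≃ₐ[F] A) (K Kinv : A) : Prop where
  twist : IsTwistPair F A R Ri J Ji ψ
  kMulInv : K * Kinv = 1
  kInvMul : Kinv * K = 1
  intwB : ∀ b ∈ B, K * b * Kinv = ψ b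
  support : tenK F A R ψ K ∈ legSpan F A (B : Set A)
  copK : cop F A K = Ji * (((1 : A) ⊗ₜ[F] K) * (rpsi F A R ψ * (K ⊗ₜ[F] (1 : A))))

end BialgDefs

section ModuleDefs

variable (A : Type*) [Ring A] [Bialgebra F A]

/-- Right partial transpose on `End V ⊗ End W`. -/
def pt2 (V W : Type*) [AddCommGroup V] [Module F V] [AddCommGroup W] [Module F W] :
    (Module.End F V ⊗[F] Module.End F W) →ₗ[F]
      (Module.End F V ⊗[F] Module.End F (Module.Dual F W)) :=
  TensorProduct.map LinearMap.id (Module.Dual.transpose (R := F) (M := W) (M' := W))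

/-- Identification `End V ⊗ End (W^∨∨) ≃ End V ⊗ End W` via the canonical iso `W ≅ W^∨∨`. -/
def ddIdent (V W : Type*) [AddCommGroup V] [Module F V] [AddCommGroup W] [Module F W]
    [FiniteDimensional F W] :
    (Module.End F V ⊗[F] Module.End F (Module.Dual F (Module.Dual F W))) →ₗ[F]
      (Module.End F V ⊗[F] Module.End F W) :=
  TensorProduct.map LinearMap.id ((Module.evalEquiv F W).conj.symm).toLinearMap

/-- The right partial trace `A ⊗ End V → A`. -/
def trace2 (V : Type*) [AddCommGroup V] [Module F V] :
    (A ⊗[F] Module.End F V) →ₗ[F] A :=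
  (TensorProduct.rid F A).toLinearMap.comp
    (TensorProduct.map LinearMap.id (LinearMap.trace F V))

/-- `T_{•,V}`: act with the second leg on `V`. -/
def actRight (V : Type*) [AddCommGroup V] [Module F V] (ρV : A →ₐ[F] Module.End F V) :
    (A ⊗[F] A) →ₐ[F] A ⊗[F] Module.End F V :=
  Algebra.TensorProduct.map (AlgHom.id F A) ρV

/-- The boundary transfer matrix `Tr₂(𝕂₍•,V₎)`. -/
def transfer (V : Type*) [AddCommGroup V] [Module F V] (ρV : A →ₐ[F] Module.End F V)
    (T : A ⊗[F] A) : A :=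
  trace2 F A V (actRight F A V ρV T)

/-- The module structure on `V ⊗ W` obtained from `Δ`. -/
def tensorRep (V W : Type*) [AddCommGroup V] [Module F V] [AddCommGroup W] [Module F W]
    (ρV : A →ₐ[F] Module.End F V) (ρW : A →ₐ[F] Module.End F W) :
    A →ₐ[F] Module.End F (V ⊗[F] W) :=
  (Module.endTensorEndAlgHom (R := F) (S := F) (A := F) (M := V) (N := W)).comp
    ((Algebra.TensorProduct.map ρV ρW).comp (cop F A))

/-- `g` (with inverse `gi`) is a boundary gauge transformation for the twist pair `(ψ, J)`. -/
def IsBoundaryGauge (R J : A ⊗[F] A) (ψ : A ≃ₐ[F] A) (g gi : A)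
    (hg1 : g * gi = 1) (hg2 : gi * g = 1) : Prop :=
  ∀ (V W : Type) [AddCommGroup V] [Module F V] [FiniteDimensional F V]
    [AddCommGroup W] [Module F W] [FiniteDimensional F W]
    (ρV : A →ₐ[F] Module.End F V) (ρW : A →ₐ[F] Module.End F W),
    let X := pt2 F V W
      ((Algebra.TensorProduct.map
        (ρV.comp (ψ.trans (conjEquiv F A g gi hg1 hg2)).toAlgHom) ρW) R)
    IsUnit X ∧ IsUnit (pt2 F V (Module.Dual F W) (Ring.inverse X)) ∧
      (Algebra.TensorProduct.map ρV ρW) ((g ⊗ₜ[F] g) * J * cop F A gi) =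
        ddIdent F V W (Ring.inverse (pt2 F V (Module.Dual F W) (Ring.inverse X)))

end ModuleDefs

namespace St17

open Algebra.TensorProduct

variable (F A : Type*) [Field F] [Ring A] [Bialgebra F A]

/-- swap of legs 1,2 on the triple tensor -/
def sig12 : (A ⊗[F] (A ⊗[F] A)) ≃ₐ[F] A ⊗[F] (A ⊗[F] A) :=
  ((Algebra.TensorProduct.assoc F F F A A A).symm.trans
    (Algebra.TensorProduct.congr (flipT F A) AlgEquiv.refl)).trans
    (Algebra.TensorProduct.assoc F F F A A A)

/-- cyclic rotation x⊗y⊗z ↦ y⊗z⊗x -/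
def tau : (A ⊗[F] (A ⊗[F] A)) ≃ₐ[F] A ⊗[F] (A ⊗[F] A) :=
  (Algebra.TensorProduct.comm F A (A ⊗[F] A)).trans (Algebra.TensorProduct.assoc F F F A A A)

/-- swap of legs 1,3 -/
def sig13 : (A ⊗[F] (A ⊗[F] A)) ≃ₐ[F] A ⊗[F] (A ⊗[F] A) :=
  (tau F A).trans (sig12 F A)

variable {F A}

@[simp] lemma flipT_tmul (x y : A) : flipT F A (x ⊗ₜ[F] y) = y ⊗ₜ[F] x := rfl

@[simp] lemma sig12_tmul (x y z : A) :
    sig12 F A (x ⊗ₜ[F] (y ⊗ₜ[F] z)) = y ⊗ₜ[F] (x ⊗ₜ[F] z) := by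
  simp [sig12, Algebra.TensorProduct.assoc_symm_tmul, Algebra.TensorProduct.assoc_tmul]

@[simp] lemma tau_tmul (x y z : A) :
    tau F A (x ⊗ₜ[F] (y ⊗ₜ[F] z)) = y ⊗ₜ[F] (z ⊗ₜ[F] x) := by
  simp [tau, Algebra.TensorProduct.assoc_tmul]

@[simp] lemma tau_symm_tmul (x y z : A) :
    (tau F A).symm (x ⊗ₜ[F] (y ⊗ₜ[F] z)) = z ⊗ₜ[F] (x ⊗ₜ[F] y) := by
  rw [(tau F A).symm_apply_eq]; simp

@[simp] lemma i12_tmul (x y : A) :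
    i12 F A (x ⊗ₜ[F] y) = x ⊗ₜ[F] (y ⊗ₜ[F] (1 : A)) := rfl

@[simp] lemma i13_tmul (x y : A) :
    i13 F A (x ⊗ₜ[F] y) = x ⊗ₜ[F] ((1 : A) ⊗ₜ[F] y) := rfl

@[simp] lemma i23_tmul (x y : A) :
    i23 F A (x ⊗ₜ[F] y) = (1 : A) ⊗ₜ[F] (x ⊗ₜ[F] y) := rfl

lemma sig12_i13 (X : A ⊗[F] A) : sig12 F A (i13 F A X) = i23 F A X := by
  induction X using TensorProduct.induction_on with
  | zero => simp
  | tmul x y => simp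
  | add x y hx hy => simp [map_add, hx, hy]

lemma sig12_i23 (X : A ⊗[F] A) : sig12 F A (i23 F A X) = i13 F A X := by
  induction X using TensorProduct.induction_on with
  | zero => simp
  | tmul x y => simp
  | add x y hx hy => simp [map_add, hx, hy]

lemma sig13_i12 (X : A ⊗[F] A) : sig13 F A (i12 F A X) = i23 F A (flipT F A X) := by
  induction X using TensorProduct.induction_on with
  | zero => simp
  | tmul x y => simp [sig13]
  | add x y hx hy => simp [map_add, hx, hy]

lemma sig13_i13 (X : A ⊗[F] A) : sig13 F A (i13 F A X) = i13 F A (flipT F A X) := by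
  induction X using TensorProduct.induction_on with
  | zero => simp
  | tmul x y => simp [sig13]
  | add x y hx hy => simp [map_add, hx, hy]

lemma sig13_i23 (X : A ⊗[F] A) : sig13 F A (i23 F A X) = i12 F A (flipT F A X) := by
  induction X using TensorProduct.induction_on with
  | zero => simp
  | tmul x y => simp [sig13]
  | add x y hx hy => simp [map_add, hx, hy]

lemma tau_i13 (X : A ⊗[F] A) : tau F A (i13 F A X) = i23 F A (flipT F A X) := by
  induction X using TensorProduct.induction_on with
  | zero => simp
  | tmul x y => simp
  | add x y hx hy => simp [map_add, hx, hy]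

lemma tau_i12 (X : A ⊗[F] A) : tau F A (i12 F A X) = i13 F A (flipT F A X) := by
  induction X using TensorProduct.induction_on with
  | zero => simp
  | tmul x y => simp
  | add x y hx hy => simp [map_add, hx, hy]

lemma tau_symm_i13 (X : A ⊗[F] A) : (tau F A).symm (i13 F A X) = i12 F A (flipT F A X) := by
  induction X using TensorProduct.induction_on with
  | zero => simp
  | tmul x y => simp
  | add x y hx hy => simp [map_add, hx, hy]

lemma tau_symm_i23 (X : A ⊗[F] A) : (tau F A).symm (i23 F A X) = i13 F A (flipT F A X) := by
  induction X using TensorProduct.induction_on with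
  | zero => simp
  | tmul x y => simp
  | add x y hx hy => simp [map_add, hx, hy]

lemma cop12_flip (X : A ⊗[F] A) : cop12 F A (flipT F A X) = tau F A (cop23 F A X) := by
  induction X using TensorProduct.induction_on with
  | zero => simp
  | tmul x y =>
    simp [cop12, cop23, tau, flipT, Algebra.TensorProduct.comm_tmul]
  | add x y hx hy => simp [map_add, hx, hy]

lemma cop23_flip (X : A ⊗[F] A) : cop23 F A (flipT F A X) = (tau F A).symm (cop12 F A X) := by
  induction X using TensorProduct.induction_on with
  | zero => simp
  | tmul x y =>
    simp [cop12, cop23, tau, flipT, Algebra.TensorProduct.comm_symm_tmul]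
  | add x y hx hy => simp [map_add, hx, hy]

lemma assoc_tmul_one (X : A ⊗[F] A) :
    (Algebra.TensorProduct.assoc F F F A A A) (X ⊗ₜ[F] (1 : A)) = i12 F A X := by
  induction X using TensorProduct.induction_on with
  | zero => simp
  | tmul x y => simp [Algebra.TensorProduct.assoc_tmul]
  | add x y hx hy => simp [TensorProduct.add_tmul, map_add, hx, hy]

lemma assoc_map_copOp (X : A ⊗[F] A) :
    (Algebra.TensorProduct.assoc F F F A A A)
      (Algebra.TensorProduct.map (copOp F A) (AlgHom.id F A) X) = sig12 F A (cop12 F A X) := by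
  induction X using TensorProduct.induction_on with
  | zero => simp
  | tmul x y =>
    simp only [Algebra.TensorProduct.map_tmul, AlgHom.coe_id, id_eq, copOp, AlgHom.coe_comp,
      Function.comp_apply, AlgEquiv.toAlgHom_eq_coe, AlgHom.coe_coe, cop12, sig12,
      AlgEquiv.trans_apply]
    simp only [AlgEquiv.coe_algHom]
    rw [AlgEquiv.symm_apply_apply]
    simp [flipT]
  | add x y hx hy => simp [map_add, hx, hy]

lemma counit2l_eq (X : A ⊗[F] A) :
    counit2l F A X = TensorProduct.lid F A (LinearMap.rTensor A Coalgebra.counit X) := by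
  induction X using TensorProduct.induction_on with
  | zero => simp
  | tmul x y => simp [counit2l, Bialgebra.counitAlgHom]
  | add x y hx hy => simp [map_add, hx, hy]

lemma counit2r_eq (X : A ⊗[F] A) :
    counit2r F A X = TensorProduct.rid F A (LinearMap.lTensor A Coalgebra.counit X) := by
  induction X using TensorProduct.induction_on with
  | zero => simp
  | tmul x y => simp [counit2r, Bialgebra.counitAlgHom]
  | add x y hx hy => simp [map_add, hx, hy]

lemma counit2l_cop (a : A) : counit2l F A (cop F A a) = a := by
  rw [counit2l_eq]
  show TensorProduct.lid F A (LinearMap.rTensor A Coalgebra.counit (Coalgebra.comul a)) = a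
  rw [Coalgebra.rTensor_counit_comul]
  simp

lemma counit2r_cop (a : A) : counit2r F A (cop F A a) = a := by
  rw [counit2r_eq]
  show TensorProduct.rid F A (LinearMap.lTensor A Coalgebra.counit (Coalgebra.comul a)) = a
  rw [Coalgebra.lTensor_counit_comul]
  simp

variable (F A) in
/-- counit on leg 1 of the triple tensor -/
def e1 : (A ⊗[F] (A ⊗[F] A)) →ₐ[F] A ⊗[F] A :=
  (Algebra.TensorProduct.lid F (A ⊗[F] A)).toAlgHom.comp
    (Algebra.TensorProduct.map (Bialgebra.counitAlgHom F A) (AlgHom.id F (A ⊗[F] A)))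

variable (F A) in
/-- counit on leg 3 of the triple tensor -/
def e3 : (A ⊗[F] (A ⊗[F] A)) →ₐ[F] A ⊗[F] A :=
  Algebra.TensorProduct.map (AlgHom.id F A) (counit2r F A)

@[simp] lemma e1_tmul (x : A) (Y : A ⊗[F] A) :
    e1 F A (x ⊗ₜ[F] Y) = Bialgebra.counitAlgHom F A x • Y := by
  simp [e1]

@[simp] lemma e3_tmul (x : A) (Y : A ⊗[F] A) :
    e3 F A (x ⊗ₜ[F] Y) = x ⊗ₜ[F] counit2r F A Y := by
  simp [e3]

lemma e1_assoc (u : A ⊗[F] A) (y : A) :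
    e1 F A ((Algebra.TensorProduct.assoc F F F A A A) (u ⊗ₜ[F] y)) = counit2l F A u ⊗ₜ[F] y := by
  induction u using TensorProduct.induction_on with
  | zero => simp
  | tmul p q =>
    rw [Algebra.TensorProduct.assoc_tmul, e1_tmul]
    simp [counit2l, TensorProduct.smul_tmul']
  | add p q hp hq =>
    rw [TensorProduct.add_tmul, map_add, map_add, hp, hq, map_add, TensorProduct.add_tmul]

lemma e1_cop12 (X : A ⊗[F] A) : e1 F A (cop12 F A X) = X := by
  induction X using TensorProduct.induction_on with
  | zero => simp
  | tmul x y =>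
    have : cop12 F A (x ⊗ₜ[F] y) =
        (Algebra.TensorProduct.assoc F F F A A A) ((cop F A x) ⊗ₜ[F] y) := rfl
    rw [this, e1_assoc, counit2l_cop]
  | add x y hx hy => simp [map_add, hx, hy]

lemma e1_i13 (X : A ⊗[F] A) : e1 F A (i13 F A X) = (1 : A) ⊗ₜ[F] counit2l F A X := by
  induction X using TensorProduct.induction_on with
  | zero => simp
  | tmul x y => simp [counit2l, TensorProduct.tmul_smul]
  | add x y hx hy => simp [map_add, hx, hy, TensorProduct.tmul_add]

lemma e1_i23 (X : A ⊗[F] A) : e1 F A (i23 F A X) = X := by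
  induction X using TensorProduct.induction_on with
  | zero => simp
  | tmul x y => simp
  | add x y hx hy => simp [map_add, hx, hy]

lemma e3_cop23 (X : A ⊗[F] A) : e3 F A (cop23 F A X) = X := by
  induction X using TensorProduct.induction_on with
  | zero => simp
  | tmul x y => simp [cop23, counit2r_cop]
  | add x y hx hy => simp [map_add, hx, hy]

lemma e3_i13 (X : A ⊗[F] A) : e3 F A (i13 F A X) = counit2r F A X ⊗ₜ[F] (1 : A) := by
  induction X using TensorProduct.induction_on with
  | zero => simp
  | tmul x y => simp [counit2r, TensorProduct.smul_tmul']
  | add x y hx hy => simp [map_add, hx, hy, TensorProduct.add_tmul]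

lemma e3_i12 (X : A ⊗[F] A) : e3 F A (i12 F A X) = X := by
  induction X using TensorProduct.induction_on with
  | zero => simp
  | tmul x y => simp [counit2r]
  | add x y hx hy => simp [map_add, hx, hy]

lemma inv_unique {M : Type*} [Monoid M] {x y z : M} (hxy : x * y = 1) (hzx : z * x = 1) :
    z = y := by
  rw [← mul_one z, ← hxy, ← mul_assoc, hzx, one_mul]

lemma cop12_def (X : A ⊗[F] A) :
    (Algebra.TensorProduct.assoc F F F A A A)
      ((Algebra.TensorProduct.map (cop F A) (AlgHom.id F A)) X) = cop12 F A X := rfl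

lemma flipT_flipT (X : A ⊗[F] A) : flipT F A (flipT F A X) = X := by
  induction X using TensorProduct.induction_on with
  | zero => simp
  | tmul x y => rfl
  | add x y hx hy => rw [map_add, map_add, hx, hy]

lemma counit2l_flip (X : A ⊗[F] A) : counit2l F A (flipT F A X) = counit2r F A X := by
  induction X using TensorProduct.induction_on with
  | zero => simp
  | tmul x y => simp [counit2l, counit2r]
  | add x y hx hy => simp [map_add, hx, hy]

lemma counit2r_flip (X : A ⊗[F] A) : counit2r F A (flipT F A X) = counit2l F A X := by
  induction X using TensorProduct.induction_on with
  | zero => simp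
  | tmul x y => simp [counit2l, counit2r]
  | add x y hx hy => simp [map_add, hx, hy]

lemma counit2l_one_tmul (u : A) : counit2l F A ((1 : A) ⊗ₜ[F] u) = u := by
  simp [counit2l]

lemma counit2r_tmul_one (u : A) : counit2r F A (u ⊗ₜ[F] (1 : A)) = u := by
  simp [counit2r]

lemma rpsi_refl (X : A ⊗[F] A) : rpsi F A X (AlgEquiv.refl : A ≃ₐ[F] A) = X := by
  induction X using TensorProduct.induction_on with
  | zero => simp [rpsi]
  | tmul x y => rfl
  | add x y hx hy => simp only [rpsi, map_add] at hx hy ⊢; rw [hx, hy]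

lemma mapT_refl (X : A ⊗[F] A) :
    mapT F A (AlgEquiv.refl : A ≃ₐ[F] A).toAlgHom (AlgEquiv.refl : A ≃ₐ[F] A).toAlgHom X = X := by
  induction X using TensorProduct.induction_on with
  | zero => simp [mapT]
  | tmul x y => rfl
  | add x y hx hy => simp only [mapT, map_add] at hx hy ⊢; rw [hx, hy]

lemma copOp_def (a : A) : copOp F A a = flipT F A (cop F A a) := rfl

lemma central_left {b : A} (hb : ∀ a : A, b * a = a * b) (X : A ⊗[F] A) :
    (b ⊗ₜ[F] (1 : A)) * X = X * (b ⊗ₜ[F] (1 : A)) := by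
  induction X using TensorProduct.induction_on with
  | zero => simp
  | tmul x y => rw [Algebra.TensorProduct.tmul_mul_tmul, Algebra.TensorProduct.tmul_mul_tmul,
      hb, one_mul, mul_one]
  | add x y hx hy => rw [mul_add, add_mul, hx, hy]

lemma central_right {b : A} (hb : ∀ a : A, b * a = a * b) (X : A ⊗[F] A) :
    ((1 : A) ⊗ₜ[F] b) * X = X * ((1 : A) ⊗ₜ[F] b) := by
  induction X using TensorProduct.induction_on with
  | zero => simp
  | tmul x y => rw [Algebra.TensorProduct.tmul_mul_tmul, Algebra.TensorProduct.tmul_mul_tmul,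
      hb, one_mul, mul_one]
  | add x y hx hy => rw [mul_add, add_mul, hx, hy]

lemma mem_legSpan_top (X : A ⊗[F] A) :
    X ∈ legSpan F A ((⊤ : Subalgebra F A) : Set A) := by
  have hset : {x : A ⊗[F] A | ∃ b ∈ ((⊤ : Subalgebra F A) : Set A), ∃ a : A, x = b ⊗ₜ[F] a}
      = {t : A ⊗[F] A | ∃ m n, m ⊗ₜ[F] n = t} := by
    ext t
    constructor
    · rintro ⟨m, -, n, rfl⟩; exact ⟨m, n, rfl⟩
    · rintro ⟨m, n, rfl⟩; exact ⟨m, Set.mem_univ m, n, rfl⟩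
  rw [legSpan, hset, TensorProduct.span_tmul_eq_top]
  trivial

lemma telescope3 {M : Type*} [Monoid M] {a b c a' b' c' : M}
    (ha : a * a' = 1) (hb : b * b' = 1) (hc : c * c' = 1) :
    (a * (b * c)) * (c' * (b' * a')) = 1 := by
  simp only [mul_assoc]
  rw [← mul_assoc c c', hc, one_mul, ← mul_assoc b b', hb, one_mul, ha]

end St17

set_option maxHeartbeats 1000000 in
/-- a balance `b` gives the cylindrical structure `(id, (R₂₁)⁻¹, b)`
on `(A, A)`. -/
theorem statement17 {F A : Type*} [Field F] [Ring A] [Bialgebra F A]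
    (R Ri : A ⊗[F] A) (hQT : IsQT F A R Ri)
    (b bi : A) (hb1 : b * bi = 1) (hb2 : bi * b = 1)
    (hbc : ∀ a : A, b * a = a * b)
    (hΔb : cop F A b = (b ⊗ₜ[F] b) * (flipT F A R * R)) :
    IsCylindrical F A R Ri ⊤ (flipT F A Ri) (flipT F A R) ((AlgEquiv.refl : A ≃ₐ[F] A)) b bi := by
  -- abbreviations
  set S := flipT F A R with hS
  set Si := flipT F A Ri with hSi
  have hSSi : S * Si = 1 := by rw [hS, hSi, ← map_mul, hQT.mulInv, map_one]
  have hSiS : Si * S = 1 := by rw [hS, hSi, ← map_mul, hQT.invMul, map_one]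
  -- the interchange relation in product form
  have intw' : ∀ a : A, R * cop F A a = copOp F A a * R := by
    intro a
    have h1 : R * cop F A a = R * cop F A a * (Ri * R) := by rw [hQT.invMul, mul_one]
    rw [h1, ← mul_assoc, hQT.intw a]
  -- key conjugation identity in (A⊗A)⊗A
  have key : ∀ Y : A ⊗[F] A,
      (R ⊗ₜ[F] (1 : A)) * (Algebra.TensorProduct.map (cop F A) (AlgHom.id F A) Y)
        = (Algebra.TensorProduct.map (copOp F A) (AlgHom.id F A) Y) * (R ⊗ₜ[F] (1 : A)) := by
    intro Y
    induction Y using TensorProduct.induction_on with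
    | zero => simp
    | tmul x y =>
      rw [Algebra.TensorProduct.map_tmul, Algebra.TensorProduct.map_tmul,
        Algebra.TensorProduct.tmul_mul_tmul, Algebra.TensorProduct.tmul_mul_tmul,
        AlgHom.coe_id, id_eq, one_mul, mul_one, intw' x]
    | add x y hx hy => rw [map_add, map_add, mul_add, add_mul, hx, hy]
  have hA : i12 F A R * cop12 F A R = St17.sig12 F A (cop12 F A R) * i12 F A R := by
    have h := congrArg (Algebra.TensorProduct.assoc F F F A A A) (key R)
    rwa [map_mul, map_mul, St17.assoc_tmul_one, St17.cop12_def, St17.assoc_map_copOp] at h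
  -- quantum Yang–Baxter equation for R
  have qybeR : i12 F A R * (i13 F A R * i23 F A R) = i23 F A R * (i13 F A R * i12 F A R) := by
    rw [← hQT.copL, hA, hQT.copL, map_mul, St17.sig12_i13, St17.sig12_i23, mul_assoc]
  -- QYBE for S, in the form Z = Z'
  have qybeS : i23 F A S * (i13 F A S * i12 F A S) = i12 F A S * (i13 F A S * i23 F A S) := by
    have h := congrArg (St17.sig13 F A) qybeR
    rwa [map_mul, map_mul, map_mul, map_mul, St17.sig13_i12, St17.sig13_i13, St17.sig13_i23] at h
  -- coproduct formulas for S
  have copLS : cop12 F A S = i23 F A S * i13 F A S := by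
    rw [hS, St17.cop12_flip, hQT.copR, map_mul, St17.tau_i13, St17.tau_i12]
  have copRS : cop23 F A S = i12 F A S * i13 F A S := by
    rw [hS, St17.cop23_flip, hQT.copL, map_mul, St17.tau_symm_i13, St17.tau_symm_i23]
  -- leg-wise inverses
  have h12a : i12 F A S * i12 F A Si = 1 := by rw [← map_mul, hSSi, map_one]
  have h12b : i12 F A Si * i12 F A S = 1 := by rw [← map_mul, hSiS, map_one]
  have h13a : i13 F A S * i13 F A Si = 1 := by rw [← map_mul, hSSi, map_one]
  have h13b : i13 F A Si * i13 F A S = 1 := by rw [← map_mul, hSiS, map_one]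
  have h23a : i23 F A S * i23 F A Si = 1 := by rw [← map_mul, hSSi, map_one]
  have h23b : i23 F A Si * i23 F A S = 1 := by rw [← map_mul, hSiS, map_one]
  -- coproducts of Si
  have c12Si : cop12 F A Si = i13 F A Si * i23 F A Si := by
    refine St17.inv_unique (x := cop12 F A S) ?_ ?_
    · rw [copLS, mul_assoc, ← mul_assoc (i13 F A S), h13a, one_mul, h23a]
    · rw [← map_mul, hSiS, map_one]
  have c23Si : cop23 F A Si = i13 F A Si * i12 F A Si := by
    refine St17.inv_unique (x := cop23 F A S) ?_ ?_
    · rw [copRS, mul_assoc, ← mul_assoc (i13 F A S), h13a, one_mul, h12a]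
    · rw [← map_mul, hSiS, map_one]
  -- counit values
  have hcl : counit2l F A R = 1 := by
    have h := congrArg (St17.e1 F A) hQT.copL
    rw [St17.e1_cop12, map_mul, St17.e1_i13, St17.e1_i23] at h
    have h4 : (1 : A) ⊗ₜ[F] (counit2l F A R) = 1 := by
      calc (1 : A) ⊗ₜ[F] (counit2l F A R)
          = ((1 : A) ⊗ₜ[F] counit2l F A R) * (R * Ri) := by rw [hQT.mulInv, mul_one]
        _ = (((1 : A) ⊗ₜ[F] counit2l F A R) * R) * Ri := by rw [mul_assoc]
        _ = R * Ri := by rw [← h]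
        _ = 1 := hQT.mulInv
    have h5 := congrArg (counit2l F A) h4
    rwa [St17.counit2l_one_tmul, map_one] at h5
  have hcr : counit2r F A R = 1 := by
    have h := congrArg (St17.e3 F A) hQT.copR
    rw [St17.e3_cop23, map_mul, St17.e3_i13, St17.e3_i12] at h
    have h4 : (counit2r F A R) ⊗ₜ[F] (1 : A) = 1 := by
      calc (counit2r F A R) ⊗ₜ[F] (1 : A)
          = ((counit2r F A R) ⊗ₜ[F] (1 : A)) * (R * Ri) := by rw [hQT.mulInv, mul_one]
        _ = (((counit2r F A R) ⊗ₜ[F] (1 : A)) * R) * Ri := by rw [mul_assoc]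
        _ = R * Ri := by rw [← h]
        _ = 1 := hQT.mulInv
    have h5 := congrArg (counit2r F A) h4
    rwa [St17.counit2r_tmul_one, map_one] at h5
  refine ⟨⟨?_, ?_, ?_, ?_, ?_, ?_, ?_⟩, hb1, hb2, ?_, ?_, ?_⟩
  · -- J * Ji = 1
    exact hSiS
  · -- Ji * J = 1
    exact hSSi
  · -- cocycle
    rw [c12Si, c23Si]
    have hXZ : (i12 F A Si * (i13 F A Si * i23 F A Si)) * (i23 F A S * (i13 F A S * i12 F A S))
        = 1 := St17.telescope3 h12b h13b h23b
    have hZY : (i23 F A S * (i13 F A S * i12 F A S)) * (i23 F A Si * (i13 F A Si * i12 F A Si))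
        = 1 := by rw [qybeS]; exact St17.telescope3 h12a h13a h23a
    exact St17.inv_unique hZY hXZ
  · -- counit left
    have h : counit2r F A Ri * counit2r F A R = 1 := by rw [← map_mul, hQT.invMul, map_one]
    rw [hcr, mul_one] at h
    rw [hSi, St17.counit2l_flip, h]
  · -- counit right
    have h : counit2l F A Ri * counit2l F A R = 1 := by rw [← map_mul, hQT.invMul, map_one]
    rw [hcl, mul_one] at h
    rw [hSi, St17.counit2r_flip, h]
  · -- intertwiner
    intro a
    rw [St17.mapT_refl]
    show copOp F A a = Si * cop F A a * S
    have h := congrArg (flipT F A) (hQT.intw a)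
    rw [map_mul, map_mul] at h
    have e2 : flipT F A (copOp F A a) = cop F A a := St17.flipT_flipT _
    have e1 : flipT F A (cop F A a) = copOp F A a := rfl
    rw [e2, e1, ← hS, ← hSi] at h
    calc copOp F A a = (Si * S) * copOp F A a * (Si * S) := by rw [hSiS, one_mul, mul_one]
      _ = Si * (S * copOp F A a * Si) * S := by simp only [mul_assoc]
      _ = Si * cop F A a * S := by rw [h]
  · -- rrel
    rw [St17.mapT_refl, hSi, St17.flipT_flipT, hQT.invMul, one_mul]
  · -- intwB
    intro c _
    show b * c * bi = c
    rw [hbc c, mul_assoc, hb1, mul_one]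
  · -- support
    exact St17.mem_legSpan_top _
  · -- copK
    rw [hΔb, St17.rpsi_refl]
    have h1 : ((1 : A) ⊗ₜ[F] b) * (R * (b ⊗ₜ[F] (1 : A))) = R * (b ⊗ₜ[F] b) := by
      rw [← mul_assoc, St17.central_right hbc R, mul_assoc, Algebra.TensorProduct.tmul_mul_tmul,
        one_mul, mul_one]
    have hb' : (b ⊗ₜ[F] b : A ⊗[F] A) = (b ⊗ₜ[F] (1 : A)) * ((1 : A) ⊗ₜ[F] b) := by
      rw [Algebra.TensorProduct.tmul_mul_tmul, mul_one, one_mul]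
    have hbb : (b ⊗ₜ[F] b : A ⊗[F] A) * (S * R) = (S * R) * (b ⊗ₜ[F] b) := by
      calc (b ⊗ₜ[F] b : A ⊗[F] A) * (S * R)
          = (b ⊗ₜ[F] (1 : A)) * (((1 : A) ⊗ₜ[F] b) * (S * R)) := by
            rw [hb', mul_assoc ((b : A) ⊗ₜ[F] (1 : A)) (((1 : A)) ⊗ₜ[F] b) (S * R)]
        _ = (b ⊗ₜ[F] (1 : A)) * ((S * R) * ((1 : A) ⊗ₜ[F] b)) := by
            rw [St17.central_right hbc (S * R)]
        _ = ((b ⊗ₜ[F] (1 : A)) * (S * R)) * ((1 : A) ⊗ₜ[F] b) := by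
            rw [← mul_assoc ((b : A) ⊗ₜ[F] (1 : A)) (S * R) (((1 : A)) ⊗ₜ[F] b)]
        _ = ((S * R) * (b ⊗ₜ[F] (1 : A))) * ((1 : A) ⊗ₜ[F] b) := by
            rw [St17.central_left hbc (S * R)]
        _ = (S * R) * (b ⊗ₜ[F] b) := by
            rw [mul_assoc (S * R) ((b : A) ⊗ₜ[F] (1 : A)) (((1 : A)) ⊗ₜ[F] b), ← hb']
    rw [hbb, h1, mul_assoc]



end
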